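/- Let G = (V,E) be a simple graph such that |V| is even and G has a universal vertex. Then G is Class 1, i.e., χ'(G) = Δ(G). -/
import Mathlib


open SimpleGraph Set

variable {V : Type*}

/-- The degree of a vertex `v` in `G` (as the cardinality of its neighbor set). -/
noncomputable def vdeg (G : SimpleGraph V) (v : V) : ℕ := (G.neighborSet v).ncard

/-- The maximum degree `Δ(G)` of `G`. -/
noncomputable def maxDeg (G : SimpleGraph V) : ℕ :=
  sSup (Set.range fun v => vdeg G v)

/-- The number of edges `|E(G)|` of `G`. -/
noncomputable def edgeCount (G : SimpleGraph V) : ℕ := G.edgeSet.ncard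

/-- A graph `G` on `n` vertices is overfull if `|E(G)| > Δ(G) * ⌊n/2⌋`. -/
def IsOverfull (G : SimpleGraph V) : Prop :=
  edgeCount G > maxDeg G * (Nat.card V / 2)

/-- `G` is subgraph-overfull if it has a subgraph `H` with `Δ(H) = Δ(G)` that is overfull. -/
def IsSubgraphOverfull (G : SimpleGraph V) : Prop :=
  ∃ (s : Set V) (H : SimpleGraph s),
    (∀ u v : s, H.Adj u v → G.Adj u.1 v.1) ∧ maxDeg H = maxDeg G ∧ IsOverfull H

/-- The closed neighborhood `N[v] = N(v) ∪ {v}` of a vertex `v`. -/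
def closedNbhd (G : SimpleGraph V) (v : V) : Set V := insert v (G.neighborSet v)

/-- `G` is neighborhood-overfull if some vertex `v` of maximum degree is such that the
subgraph induced by its closed neighborhood `N[v]` is overfull. -/
def IsNbhdOverfull (G : SimpleGraph V) : Prop :=
  ∃ v, vdeg G v = maxDeg G ∧ IsOverfull (G.induce (closedNbhd G v))

/-- A proper edge coloring of `G` with `n` colors: edges sharing a vertex get distinct colors. -/
def EdgeColorable (G : SimpleGraph V) (n : ℕ) : Prop :=
  ∃ c : G.edgeSet → Fin n, ∀ e f : G.edgeSet,
    e ≠ f → (∃ v, v ∈ (e : Sym2 V) ∧ v ∈ (f : Sym2 V)) → c e ≠ c f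

/-- The chromatic index `χ'(G)`. -/
noncomputable def chromIndex (G : SimpleGraph V) : ℕ :=
  sInf {n | EdgeColorable G n}

/-- A proper total coloring of `G` with `n` colors: adjacent vertices get distinct colors,
edges sharing a vertex get distinct colors, and each vertex gets a color distinct from all
its incident edges. -/
def TotalColorable (G : SimpleGraph V) (n : ℕ) : Prop :=
  ∃ (cv : V → Fin n) (ce : G.edgeSet → Fin n),
    (∀ u v, G.Adj u v → cv u ≠ cv v) ∧
    (∀ e f : G.edgeSet, e ≠ f → (∃ v, v ∈ (e : Sym2 V) ∧ v ∈ (f : Sym2 V)) → ce e ≠ ce f) ∧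
    (∀ (v : V) (e : G.edgeSet), v ∈ (e : Sym2 V) → cv v ≠ ce e)

/-- The total chromatic number `χ''(G)`. -/
noncomputable def totalChrom (G : SimpleGraph V) : ℕ :=
  sInf {n | TotalColorable G n}

/-- `T` is a tree `t`-spanner of `G`: a spanning tree of `G` in which any two vertices
adjacent in `G` are at distance at most `t`. -/
def IsTreeSpanner (G T : SimpleGraph V) (t : ℕ) : Prop :=
  T ≤ G ∧ T.IsTree ∧ ∀ u v, G.Adj u v → T.dist u v ≤ t

/-- The stretch index `σ(G)`: the least `t ≥ 1` such that `G` admits a tree `t`-spanner. -/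
noncomputable def stretchIndex (G : SimpleGraph V) : ℕ :=
  sInf {t | 1 ≤ t ∧ ∃ T, IsTreeSpanner G T t}

/-- `(X, Y)` is a split partition of `G`: `X` is a clique, `Y` is an independent set,
and they partition the vertex set. -/
def IsSplitPartition (G : SimpleGraph V) (X Y : Set V) : Prop :=
  X ∪ Y = Set.univ ∧ Disjoint X Y ∧ G.IsClique X ∧ ∀ u ∈ Y, ∀ v ∈ Y, ¬ G.Adj u v

/-- `G` is a split graph. -/
def IsSplitGraph (G : SimpleGraph V) : Prop := ∃ X Y, IsSplitPartition G X Y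

/-- `X` is a maximal clique of `G`. -/
def IsMaximalClique (G : SimpleGraph V) (X : Set V) : Prop :=
  G.IsClique X ∧ ∀ X', G.IsClique X' → X ⊆ X' → X' = X

/-- `v` is a universal vertex of `G`: it is adjacent to every other vertex. -/
def UniversalVertex (G : SimpleGraph V) (v : V) : Prop := ∀ u, u ≠ v → G.Adj v u

/-- `v` is universal in the subgraph of `G` induced by a set `s` of vertices. -/
def UniversalIn (G : SimpleGraph V) (s : Set V) (v : V) : Prop :=
  v ∈ s ∧ ∀ u ∈ s, u ≠ v → G.Adj v u

/-- The set of pendant (degree-one) vertices of `G`. -/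
def pendants (G : SimpleGraph V) : Set V := {v | vdeg G v = 1}

/-- The matching number `α'(G)`: the maximum number of pairwise disjoint edges of `G`. -/
noncomputable def matchingNum (G : SimpleGraph V) : ℕ :=
  sSup {n | ∃ M : G.Subgraph, M.IsMatching ∧ M.edgeSet.ncard = n}

/-- A graph with an even number of vertices and a universal vertex is Class 1
(`χ'(G) = Δ(G)`). -/
private lemma stmt6_aux_compl [Fintype V] (v : V) :
    ({v}ᶜ : Set V).ncard = Fintype.card V - 1 := by
  have h := Set.ncard_add_ncard_compl ({v} : Set V)
  simp only [Set.ncard_univ, Set.ncard_singleton, Nat.card_eq_fintype_card] at h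
  omega

theorem stmt6 [Fintype V] (G : SimpleGraph V) (heven : Even (Nat.card V))
    (huniv : ∃ v, UniversalVertex G v) :
    chromIndex G = maxDeg G := by
  classical
  obtain ⟨v₀, hv₀⟩ := huniv
  set n := Fintype.card V with hn
  have hncard : Nat.card V = n := Nat.card_eq_fintype_card
  have hn1 : 1 ≤ n := Fintype.card_pos_iff.mpr ⟨v₀⟩
  have hn2 : 2 ≤ n := by
    rw [hncard] at heven
    rcases heven with ⟨k, hk⟩
    omega
  set m := n - 1 with hm
  have hm1 : 1 ≤ m := by omega
  haveI : NeZero m := ⟨by omega⟩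
  -- neighbor set of the universal vertex
  have hnbhd : G.neighborSet v₀ = {v₀}ᶜ := by
    ext u
    simp only [SimpleGraph.mem_neighborSet, Set.mem_compl_iff, Set.mem_singleton_iff]
    exact ⟨fun h => (G.ne_of_adj h).symm, fun h => hv₀ u h⟩
  have hvdeg0 : vdeg G v₀ = m := by
    rw [vdeg, hnbhd, stmt6_aux_compl]
  have hvdeg_le : ∀ v, vdeg G v ≤ m := by
    intro v
    have hsub : G.neighborSet v ⊆ {v}ᶜ := by
      intro u hu
      simp only [Set.mem_compl_iff, Set.mem_singleton_iff]
      exact fun h => G.irrefl (h ▸ hu)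
    have := Set.ncard_le_ncard hsub (Set.toFinite _)
    rwa [stmt6_aux_compl] at this
  have hmaxDeg : maxDeg G = m := by
    rw [maxDeg]
    apply le_antisymm
    · apply csSup_le (⟨vdeg G v₀, v₀, rfl⟩ : (Set.range fun v => vdeg G v).Nonempty)
      rintro x ⟨v, rfl⟩
      exact hvdeg_le v
    · exact le_csSup ⟨m, by rintro x ⟨v, rfl⟩; exact hvdeg_le v⟩
        (⟨v₀, hvdeg0⟩ : m ∈ Set.range fun v => vdeg G v)
  rw [hmaxDeg]
  -- index function
  have hcardsub : Fintype.card {u : V // u ≠ v₀} = m := by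
    simp only [hm, hn]
    rw [Fintype.card_subtype_compl, Fintype.card_subtype_eq]
  set φ : {u : V // u ≠ v₀} ≃ Fin m := Fintype.equivFinOfCardEq hcardsub with hφ
  set idx : V → ZMod m := fun u => if h : u = v₀ then 0 else (((φ ⟨u, h⟩ : Fin m) : ℕ) : ZMod m)
    with hidx
  have idx_inj : ∀ u u', u ≠ v₀ → u' ≠ v₀ → idx u = idx u' → u = u' := by
    intro u u' hu hu' h
    simp only [hidx, dif_neg hu, dif_neg hu'] at h
    have h2 : ((φ ⟨u, hu⟩ : Fin m) : ℕ) = ((φ ⟨u', hu'⟩ : Fin m) : ℕ) := by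
      have := congrArg ZMod.val h
      rwa [ZMod.val_natCast_of_lt (Fin.isLt _), ZMod.val_natCast_of_lt (Fin.isLt _)] at this
    have h3 : φ ⟨u, hu⟩ = φ ⟨u', hu'⟩ := Fin.ext h2
    have := φ.injective h3
    exact congrArg Subtype.val this
  have h2unit : IsUnit (2 : ZMod m) := by
    have hodd : Odd m := by
      rw [hncard] at heven
      rcases heven with ⟨k, hk⟩
      exact ⟨k - 1, by omega⟩
    have : IsUnit ((2 : ℕ) : ZMod m) := (ZMod.isUnit_iff_coprime 2 m).mpr
      (Nat.coprime_two_left.mpr hodd)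
    simpa using this
  -- the coloring function
  set col : V → V → ZMod m := fun a b =>
    if a = v₀ then 2 * idx b else if b = v₀ then 2 * idx a else idx a + idx b with hcol
  have col_symm : ∀ a b, col a b = col b a := by
    intro a b
    by_cases h1 : a = v₀ <;> by_cases h2 : b = v₀ <;>
      simp [hcol, h1, h2, add_comm]
  have col_key : ∀ w a b, a ≠ w → b ≠ w → a ≠ b → col w a ≠ col w b := by
    intro w a b haw hbw hab h
    by_cases hw : w = v₀
    · simp only [hcol, if_pos hw] at h
      have hia : idx a = idx b := h2unit.mul_right_injective h
      exact hab (idx_inj a b (fun h' => haw (h'.trans hw.symm))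
        (fun h' => hbw (h'.trans hw.symm)) hia)
    · by_cases ha : a = v₀
      · have hb : b ≠ v₀ := fun h' => hab (ha.trans h'.symm)
        simp only [hcol, if_neg hw, if_pos ha, if_neg hb] at h
        rw [two_mul] at h
        have h' : idx w = idx b := add_left_cancel h
        exact hbw ((idx_inj w b hw hb h').symm)
      · by_cases hb : b = v₀
        · simp only [hcol, if_neg hw, if_neg ha, if_pos hb] at h
          rw [two_mul] at h
          have h' : idx a = idx w := add_left_cancel h
          exact haw (idx_inj a w ha hw h')
        · simp only [hcol, if_neg hw, if_neg ha, if_neg hb] at h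
          exact hab (idx_inj a b ha hb (add_left_cancel h))
  set cS : Sym2 V → ZMod m := Sym2.lift ⟨col, col_symm⟩ with hcS
  have cS_eq : ∀ a b, cS s(a, b) = col a b := fun a b => rfl
  -- properness on shared-endpoint edges
  have cS_proper : ∀ s t : Sym2 V, s ∈ G.edgeSet → t ∈ G.edgeSet → s ≠ t →
      (∃ v, v ∈ s ∧ v ∈ t) → cS s ≠ cS t := by
    rintro s t hs ht hst ⟨w, hws, hwt⟩
    have hsd : ¬ s.IsDiag := G.not_isDiag_of_mem_edgeSet hs
    have htd : ¬ t.IsDiag := G.not_isDiag_of_mem_edgeSet ht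
    set a := Sym2.Mem.other' hws with ha
    set b := Sym2.Mem.other' hwt with hb
    have hsa : s(w, a) = s := Sym2.other_spec' hws
    have htb : s(w, b) = t := Sym2.other_spec' hwt
    have haw : a ≠ w := by
      rw [ha, ← Sym2.other_eq_other' hws]
      exact Sym2.other_ne hsd hws
    have hbw : b ≠ w := by
      rw [hb, ← Sym2.other_eq_other' hwt]
      exact Sym2.other_ne htd hwt
    have hab : a ≠ b := by
      intro h
      apply hst
      rw [← hsa, ← htb, h]
    rw [← hsa, ← htb, cS_eq, cS_eq]
    exact col_key w a b haw hbw hab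
  -- upper bound: G is m-edge-colorable
  have hcolorable : EdgeColorable G m := by
    set eqm : ZMod m ≃ Fin m := Fintype.equivFinOfCardEq (ZMod.card m) with heqm
    refine ⟨fun e => eqm (cS e.1), ?_⟩
    intro e f hef hshare
    intro h
    have h2 : cS e.1 = cS f.1 := eqm.injective h
    have hne : e.1 ≠ f.1 := fun h' => hef (Subtype.ext h')
    exact cS_proper e.1 f.1 e.2 f.2 hne hshare h2
  -- lower bound: any coloring needs at least m colors
  have hlower : ∀ k, EdgeColorable G k → m ≤ k := by
    rintro k ⟨c, hc⟩
    have hf : ∀ u : G.neighborSet v₀, s(v₀, (u : V)) ∈ G.edgeSet := by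
      rintro ⟨u, hu⟩
      exact hu
    set F : G.neighborSet v₀ → Fin k := fun u => c ⟨s(v₀, (u : V)), hf u⟩ with hF
    have hFinj : Function.Injective F := by
      rintro ⟨u, hu⟩ ⟨u', hu'⟩ h
      by_contra hne
      have hne' : u ≠ u' := fun h' => hne (Subtype.ext h')
      have hedges : (⟨s(v₀, u), hf ⟨u, hu⟩⟩ : G.edgeSet) ≠ ⟨s(v₀, u'), hf ⟨u', hu'⟩⟩ := by
        intro h'
        have hval : s(v₀, u) = s(v₀, u') := congrArg Subtype.val h'
        exact hne' (Sym2.congr_right.mp hval)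
      exact hc _ _ hedges ⟨v₀, Sym2.mem_mk_left _ _, Sym2.mem_mk_left _ _⟩ h
    have : Nat.card (G.neighborSet v₀) ≤ Nat.card (Fin k) :=
      Nat.card_le_card_of_injective F hFinj
    rw [Nat.card_eq_fintype_card, Nat.card_eq_fintype_card, Fintype.card_fin] at this
    have h2 : vdeg G v₀ = Fintype.card (G.neighborSet v₀) := by
      rw [vdeg, ← Nat.card_coe_set_eq, Nat.card_eq_fintype_card]
    omega
  -- conclude
  rw [chromIndex]
  apply le_antisymm
  · exact Nat.sInf_le (show m ∈ {n | EdgeColorable G n} from hcolorable)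
  · exact hlower _ (Nat.sInf_mem (⟨m, hcolorable⟩ : {n | EdgeColorable G n}.Nonempty))
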